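/- Let G be a compact group and π an irreducible unitary representation of G on a finite dimensional complex Hilbert space H. If A ⊆ B(H) is a weakly closed abelian subalgebra normalized by π(G) (i.e., π(g) A π(g)⁻¹ = A for all g ∈ G), then A is self-adjoint: T ∈ A implies T* ∈ A. -/

import Mathlib

set_option maxHeartbeats 1600000000
set_option synthInstance.maxHeartbeats 1000000
open scoped InnerProductSpace ComplexConjugate

private lemma aux_wedderburn (R : Type*) [CommRing R] [Algebra ℂ R] [FiniteDimensional ℂ R]
    [IsReduced R] :
    ∃ (n : ℕ) (e : Fin n → R),
      (∀ i, e i ≠ 0) ∧ (∀ i, e i * e i = e i) ∧ (∀ i j, i ≠ j → e i * e j = 0) ∧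
      (∑ i, e i = 1) ∧ ∀ (x : R) (i : Fin n), ∃ c : ℂ, x * e i = c • e i := by
  classical
  haveI : IsArtinianRing R := isArtinian_of_tower ℂ inferInstance
  haveI : Finite (MaximalSpectrum R) := inferInstance
  haveI : Fintype (MaximalSpectrum R) := Fintype.ofFinite _
  letI instF : ∀ I : (MaximalSpectrum R), Field (R ⧸ I.asIdeal) := fun I =>
    IsArtinianRing.fieldOfSubtypeIsMaximal R I
  set φ := IsArtinianRing.equivPi R with hφ
  set ε : (MaximalSpectrum R) → R := fun I => φ.symm (Pi.single I 1) with hε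
  have hmul : ∀ I J, ε I * ε J = if I = J then ε I else 0 := by
    intro I J
    apply φ.injective
    rw [map_mul, AlgEquiv.apply_symm_apply, AlgEquiv.apply_symm_apply]
    split_ifs with h
    · subst h
      rw [AlgEquiv.apply_symm_apply]
      funext K
      by_cases hK : K = I
      · subst hK; simp
      · simp [Pi.single_apply, hK]
    · rw [map_zero]
      funext K
      by_cases hKI : K = I <;> by_cases hKJ : K = J <;>
        simp [Pi.single_apply, hKI, hKJ] <;> aesop
  have hne : ∀ I, ε I ≠ 0 := by
    intro I h
    have h1 : (Pi.single I 1 : ∀ J : (MaximalSpectrum R), R ⧸ J.asIdeal) = 0 := by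
      have := congrArg φ h
      rwa [AlgEquiv.apply_symm_apply, map_zero] at this
    have := congrFun h1 I
    simp at this
  have hsum : (∑ I, ε I) = 1 := by
    apply φ.injective
    rw [map_sum, map_one]
    have : ∀ I : (MaximalSpectrum R), φ (ε I) = Pi.single I 1 := fun I =>
      AlgEquiv.apply_symm_apply _ _
    simp_rw [this]
    funext K
    rw [Finset.sum_apply]
    simp [Pi.single_apply]
  have hcomp : ∀ (r : R) (I : (MaximalSpectrum R)),
      φ r I = Ideal.Quotient.mk I.asIdeal r := fun r I => rfl
  have hscalar : ∀ (x : R) (I : (MaximalSpectrum R)), ∃ c : ℂ, x * ε I = c • ε I := by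
    intro x I
    haveI : Module.Finite ℂ (R ⧸ I.asIdeal) := Module.Finite.quotient ℂ _
    haveI : Algebra.IsIntegral ℂ (R ⧸ I.asIdeal) := Algebra.IsIntegral.of_finite ℂ _
    have hsurj : Function.Surjective (algebraMap ℂ (R ⧸ I.asIdeal)) :=
      IsAlgClosed.algebraMap_bijective_of_isIntegral.2
    obtain ⟨c, hc⟩ := hsurj (Ideal.Quotient.mk I.asIdeal x)
    have hc' : Ideal.Quotient.mk I.asIdeal (algebraMap ℂ R c) = Ideal.Quotient.mk I.asIdeal x := by
      rw [← hc, IsScalarTower.algebraMap_apply ℂ R (R ⧸ I.asIdeal)]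
      rfl
    refine ⟨c, φ.injective ?_⟩
    rw [Algebra.smul_def, map_mul, map_mul, AlgEquiv.apply_symm_apply]
    funext K
    by_cases hK : K = I
    · subst hK
      simp only [Pi.mul_apply, Pi.single_eq_same, mul_one]
      rw [hcomp, hcomp, hc']
    · simp [Pi.single_apply, hK]
  obtain ⟨l⟩ := Fintype.truncEquivFin (MaximalSpectrum R)
  refine ⟨Fintype.card (MaximalSpectrum R), fun i => ε (l.symm i), ?_, ?_, ?_, ?_, ?_⟩
  · intro i; exact hne _
  · intro i; rw [hmul]; simp
  · intro i j hij; rw [hmul, if_neg (l.symm.injective.ne hij)]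
  · rw [← hsum]
    exact Fintype.sum_equiv l.symm _ _ (fun i => rfl)
  · intro x i; exact hscalar x _

/-- Inductive algebras for a compact group are self-adjoint: if `π` is a continuous
irreducible unitary representation of a compact group `G` on a finite dimensional
complex Hilbert space `H`, and `A` is a weakly closed (equivalently, in finite
dimensions, closed) abelian subalgebra of `B(H)` normalized by `π(G)`, then `A` is
closed under adjoints. -/
theorem inductive_algebra_selfAdjoint_of_compact
    (G : Type*) [Group G] [TopologicalSpace G] [IsTopologicalGroup G] [CompactSpace G]
    (H : Type*) [NormedAddCommGroup H] [InnerProductSpace ℂ H] [FiniteDimensional ℂ H]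
    (π : G →* unitary (H →L[ℂ] H))
    (hcont : Continuous fun g : G => (π g : H →L[ℂ] H))
    (hirr : ∀ U : Submodule ℂ H, (∀ g : G, ∀ v ∈ U, (π g : H →L[ℂ] H) v ∈ U) →
      U = ⊥ ∨ U = ⊤)
    (A : Subalgebra ℂ (H →L[ℂ] H))
    (hclosed : IsClosed (A : Set (H →L[ℂ] H)))
    (habelian : ∀ S ∈ A, ∀ T ∈ A, S * T = T * S)
    (hnorm : ∀ g : G,
      (fun T : H →L[ℂ] H => (π g : H →L[ℂ] H) * T * ((π g)⁻¹ : unitary (H →L[ℂ] H))) '' A = A) :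
    ∀ T ∈ A, star T ∈ A := by
  classical
  rcases subsingleton_or_nontrivial H with hH | hH
  · intro T hT
    have : star T = T := Subsingleton.elim _ _
    rwa [this]
  haveI : Nontrivial H := hH
  letI : CommRing ↥A := { (inferInstance : Ring ↥A) with
    mul_comm := fun a b => Subtype.ext (habelian a.1 a.2 b.1 b.2) }
  haveI : IsNoetherianRing ↥A := isNoetherian_of_tower ℂ inferInstance
  have hval : ∀ g : G, ((π g)⁻¹ : unitary (H →L[ℂ] H)) * (π g : H →L[ℂ] H) = 1 := by
    intro g
    rw [← Unitary.star_eq_inv]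
    exact Unitary.coe_star_mul_self (π g)
  have hval' : ∀ g : G, (π g : H →L[ℂ] H) * ((π g)⁻¹ : unitary (H →L[ℂ] H)) = 1 := by
    intro g
    rw [← Unitary.star_eq_inv]
    exact Unitary.coe_mul_star_self (π g)
  have hconjmem : ∀ g : G, ∀ T ∈ A,
      (π g : H →L[ℂ] H) * T * ((π g)⁻¹ : unitary (H →L[ℂ] H)) ∈ A := by
    intro g T hT
    have hmem : (π g : H →L[ℂ] H) * T * ((π g)⁻¹ : unitary (H →L[ℂ] H)) ∈
        (fun T : H →L[ℂ] H => (π g : H →L[ℂ] H) * T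
          * ((π g)⁻¹ : unitary (H →L[ℂ] H))) '' A := ⟨T, hT, rfl⟩
    rw [hnorm g] at hmem
    exact hmem
  have hconjpow : ∀ (g : G) (S : H →L[ℂ] H) (n : ℕ),
      ((π g : H →L[ℂ] H) * S * ((π g)⁻¹ : unitary (H →L[ℂ] H))) ^ n
        = (π g : H →L[ℂ] H) * S ^ n * ((π g)⁻¹ : unitary (H →L[ℂ] H)) := by
    intro g S n
    induction n with
    | zero => rw [pow_zero, pow_zero, mul_one, hval' g]
    | succ n ih =>
      rw [pow_succ, pow_succ, ih]
      simp only [mul_assoc]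
      rw [← mul_assoc (((π g)⁻¹ : unitary (H →L[ℂ] H)) : H →L[ℂ] H) (π g : H →L[ℂ] H),
        hval g, one_mul]
  haveI hred : IsReduced ↥A := by
    set U : Submodule ℂ H :=
      ⨆ T : {T : H →L[ℂ] H // T ∈ A ∧ IsNilpotent T}, LinearMap.range (T.1 : H →ₗ[ℂ] H) with hU
    have hUinv : ∀ g : G, ∀ v ∈ U, (π g : H →L[ℂ] H) v ∈ U := by
      intro g v hv
      refine Submodule.iSup_induction _ (motive := fun x => (π g : H →L[ℂ] H) x ∈ U) hv ?_ ?_ ?_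
      · rintro ⟨T, hTA, hTn⟩ x ⟨w, rfl⟩
        set T' : H →L[ℂ] H :=
          (π g : H →L[ℂ] H) * T * ((π g)⁻¹ : unitary (H →L[ℂ] H)) with hT'
        have hT'A : T' ∈ A := hconjmem g T hTA
        have hT'n : IsNilpotent T' := by
          obtain ⟨n, hn⟩ := hTn
          exact ⟨n, by rw [hT', hconjpow g T n, hn, mul_zero, zero_mul]⟩
        show (π g : H →L[ℂ] H) (T w) ∈ U
        have : (π g : H →L[ℂ] H) (T w) = T' ((π g : H →L[ℂ] H) w) := by
          rw [hT']
          simp only [ContinuousLinearMap.mul_apply]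
          congr 1
          have := congrArg (fun S : H →L[ℂ] H => T (S w)) (hval g)
          simpa using this.symm
        rw [this]
        exact le_iSup (fun T : {T : H →L[ℂ] H // T ∈ A ∧ IsNilpotent T} =>
          LinearMap.range (T.1 : H →ₗ[ℂ] H)) ⟨T', hT'A, hT'n⟩ ⟨_, rfl⟩
      · simpa using Submodule.zero_mem U
      · intro x y hx hy
        rw [map_add]
        exact Submodule.add_mem U hx hy
    rcases hirr U hUinv with hbot | htop
    · constructor
      intro a ha
      have haval : IsNilpotent (a.1 : H →L[ℂ] H) := by
        obtain ⟨n, hn⟩ := ha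
        exact ⟨n, by simpa using congrArg Subtype.val hn⟩
      have hle : LinearMap.range ((a.1 : H →L[ℂ] H) : H →ₗ[ℂ] H) ≤ U :=
        le_iSup (fun T : {T : H →L[ℂ] H // T ∈ A ∧ IsNilpotent T} =>
          LinearMap.range (T.1 : H →ₗ[ℂ] H)) ⟨a.1, a.2, haval⟩
      rw [hbot, le_bot_iff, LinearMap.range_eq_bot] at hle
      have hz : (a.1 : H →L[ℂ] H) = 0 := by
        ext v
        have := congrFun (congrArg (fun f : H →ₗ[ℂ] H => (f : H → H)) hle) v
        simpa using this
      exact Subtype.ext hz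
    · exfalso
      obtain ⟨m, hm⟩ := IsNoetherianRing.isNilpotent_nilradical ↥A
      set P : ℕ → Submodule ℂ H := fun k =>
        ⨆ a : {a : ↥A // a ∈ (nilradical ↥A) ^ k}, LinearMap.range ((a.1.1 : H →L[ℂ] H) : H →ₗ[ℂ] H)
        with hP
      have hP1 : P 1 = ⊤ := by
        rw [← top_le_iff, ← htop, hU]
        refine iSup_le fun T => ?_
        have hmem : (⟨T.1, T.2.1⟩ : ↥A) ∈ (nilradical ↥A) ^ 1 := by
          rw [pow_one, mem_nilradical]
          obtain ⟨n, hn⟩ := T.2.2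
          exact ⟨n, Subtype.ext (by simpa using hn)⟩
        exact le_iSup (fun a : {a : ↥A // a ∈ (nilradical ↥A) ^ 1} =>
          LinearMap.range ((a.1.1 : H →L[ℂ] H) : H →ₗ[ℂ] H)) ⟨⟨T.1, T.2.1⟩, hmem⟩
      have hPsucc : ∀ k : ℕ, P (k + 1) = ⊤ → P (k + 2) = ⊤ := by
        intro k hk
        rw [← top_le_iff, ← hk]
        refine iSup_le fun a => ?_
        rintro x ⟨v, rfl⟩
        have hv : v ∈ P 1 := hP1 ▸ Submodule.mem_top
        refine Submodule.iSup_induction _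
          (motive := fun w => (a.1.1 : H →L[ℂ] H) w ∈ P (k + 2)) hv ?_ ?_ ?_
        · rintro ⟨b, hb⟩ x ⟨w, rfl⟩
          have hab : a.1 * b ∈ (nilradical ↥A) ^ (k + 2) := by
            rw [pow_succ]
            exact Ideal.mul_mem_mul a.2 (by rwa [pow_one] at hb)
          show (a.1.1 : H →L[ℂ] H) ((b.1 : H →L[ℂ] H) w) ∈ P (k + 2)
          have : (a.1.1 : H →L[ℂ] H) ((b.1 : H →L[ℂ] H) w)
              = ((a.1 * b).1 : H →L[ℂ] H) w := rfl
          rw [this]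
          exact le_iSup (fun c : {c : ↥A // c ∈ (nilradical ↥A) ^ (k + 2)} =>
            LinearMap.range ((c.1.1 : H →L[ℂ] H) : H →ₗ[ℂ] H)) ⟨a.1 * b, hab⟩ ⟨w, rfl⟩
        · simpa using Submodule.zero_mem (P (k + 2))
        · intro x y hx hy
          rw [map_add]
          exact Submodule.add_mem _ hx hy
      have hPall : ∀ k : ℕ, P (k + 1) = ⊤ := by
        intro k
        induction k with
        | zero => exact hP1
        | succ k ih => exact hPsucc k ih
      have hPm : P (m + 1) = ⊥ := by
        rw [hP, ← le_bot_iff]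
        refine iSup_le fun a => ?_
        have hzero : (nilradical ↥A) ^ (m + 1) = ⊥ := by
          rw [pow_succ, hm, zero_mul]
          rfl
        have ha0 : a.1 = 0 := by
          have : (a.1 : ↥A) ∈ (⊥ : Ideal ↥A) := hzero.le a.2
          simpa using this
        rw [ha0]
        simp
      exact top_ne_bot ((hPall m).symm.trans hPm)
  obtain ⟨n, e, hne, hidem, horthmul, hsum, hscalar⟩ := aux_wedderburn ↥A
  have hsummul : ∀ (S : Finset (Fin n)) (j : Fin n),
      (∑ i ∈ S, e i) * e j = if j ∈ S then e j else 0 := by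
    intro S j
    rw [Finset.sum_mul]
    by_cases hj : j ∈ S
    · rw [if_pos hj,
        Finset.sum_eq_single j (fun i _ hij => horthmul i j hij) (fun h => absurd hj h)]
      exact hidem j
    · rw [if_neg hj]
      exact Finset.sum_eq_zero fun i hi => horthmul i j (fun h => hj (h ▸ hi))
  have hidemsum : ∀ f : ↥A, f * f = f → ∃ S : Finset (Fin n), f = ∑ i ∈ S, e i := by
    intro f hf
    have hc : ∀ i : Fin n, f * e i = e i ∨ f * e i = 0 := by
      intro i
      obtain ⟨c, hfc⟩ := hscalar f i
      have key : (c * c) • e i = c • e i := by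
        have h1 : (f * e i) * (f * e i) = f * e i := by
          rw [mul_mul_mul_comm, hf, hidem]
        rw [hfc, smul_mul_smul_comm, hidem] at h1
        exact h1
      have h2 : (c * c - c) • e i = 0 := by
        rw [sub_smul, key, sub_self]
      have h23 : c * c - c = 0 ∨ e i = 0 := by
        by_cases hc0 : c * c - c = 0
        · exact Or.inl hc0
        · right
          have h4 := congrArg (fun x : ↥A => (c * c - c)⁻¹ • x) h2
          simp only [smul_smul, inv_mul_cancel₀ hc0, one_smul, smul_zero] at h4
          exact h4
      rcases h23 with h3 | h3
      · have hcc : c = 0 ∨ c = 1 := by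
          have h0 : c * (c - 1) = 0 := by rw [mul_sub, mul_one]; exact h3
          rcases mul_eq_zero.mp h0 with h | h
          · exact Or.inl h
          · exact Or.inr (sub_eq_zero.mp h)
        rcases hcc with h4 | h4
        · right; rw [hfc, h4, zero_smul]
        · left; rw [hfc, h4, one_smul]
      · exact absurd h3 (hne i)
    refine ⟨Finset.univ.filter (fun i => f * e i = e i), ?_⟩
    have hdec : f = ∑ i, f * e i := by rw [← Finset.mul_sum, hsum, mul_one]
    conv_lhs => rw [hdec]
    rw [Finset.sum_filter]
    refine Finset.sum_congr rfl fun i _ => ?_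
    rcases hc i with h | h
    · rw [h]; simp
    · rw [h, if_neg (fun hh => hne i hh.symm)]
  -- conjugation map
  have hcgmem : ∀ (g : G) (a : ↥A),
      (π g : H →L[ℂ] H) * a.1 * ((π g)⁻¹ : unitary (H →L[ℂ] H)) ∈ A :=
    fun g a => hconjmem g a.1 a.2
  set cg : G → ↥A → ↥A := fun g a => ⟨_, hcgmem g a⟩ with hcgdef
  have hcg_val : ∀ g a, (cg g a).1
      = (π g : H →L[ℂ] H) * a.1 * ((π g)⁻¹ : unitary (H →L[ℂ] H)) := fun g a => rfl
  have hcg_mul : ∀ g a b, cg g (a * b) = cg g a * cg g b := by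
    intro g a b
    apply Subtype.ext
    rw [hcg_val]
    have hab : ((a * b : ↥A) : H →L[ℂ] H) = (a.1 : H →L[ℂ] H) * b.1 := rfl
    have hab2 : ((cg g a * cg g b : ↥A) : H →L[ℂ] H) = (cg g a).1 * (cg g b).1 := rfl
    rw [hab, hab2, hcg_val, hcg_val]
    simp only [mul_assoc]
    rw [← mul_assoc (((π g)⁻¹ : unitary (H →L[ℂ] H)) : H →L[ℂ] H) (π g : H →L[ℂ] H),
      hval g, one_mul]
  have hcg_inv : ∀ g a, cg g⁻¹ (cg g a) = a := by
    intro g a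
    apply Subtype.ext
    rw [hcg_val, hcg_val]
    have h1 : (π g⁻¹ : H →L[ℂ] H) = (((π g)⁻¹ : unitary (H →L[ℂ] H)) : H →L[ℂ] H) := by
      rw [map_inv π g]
    have h2 : (((π g⁻¹)⁻¹ : unitary (H →L[ℂ] H)) : H →L[ℂ] H) = (π g : H →L[ℂ] H) := by
      rw [map_inv π g, inv_inv]
    rw [h1, h2]
    simp only [mul_assoc]
    rw [hval g, mul_one, ← mul_assoc, hval g, one_mul]
  have hcg_inv' : ∀ g a, cg g (cg g⁻¹ a) = a := by
    intro g a
    have := hcg_inv g⁻¹ a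
    rwa [inv_inv] at this
  have hcg_ne : ∀ g a, a ≠ 0 → cg g a ≠ 0 := by
    intro g a ha h
    apply ha
    rw [← hcg_inv g a, h]
    apply Subtype.ext
    rw [hcg_val]
    have h0 : ((0 : ↥A) : H →L[ℂ] H) = 0 := rfl
    rw [h0, mul_zero, zero_mul]
  have hperm : ∀ (g : G) (i : Fin n), ∃ j : Fin n,
      (π g : H →L[ℂ] H) * (e i).1 * ((π g)⁻¹ : unitary (H →L[ℂ] H)) = (e j).1 := by
    intro g i
    have hf : cg g (e i) * cg g (e i) = cg g (e i) := by rw [← hcg_mul, hidem]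
    obtain ⟨S, hS⟩ := hidemsum _ hf
    have hSne : S.Nonempty := by
      rcases Finset.eq_empty_or_nonempty S with h | h
      · exact absurd (by rw [hS, h, Finset.sum_empty]) (hcg_ne g (e i) (hne i))
      · exact h
    obtain ⟨j, hj⟩ := hSne
    refine ⟨j, ?_⟩
    have h1 : e j * cg g (e i) = e j := by
      rw [hS, mul_comm, hsummul, if_pos hj]
    have h2 : cg g⁻¹ (e j) * e i = cg g⁻¹ (e j) := by
      have := congrArg (cg g⁻¹) h1
      rwa [hcg_mul, hcg_inv] at this
    obtain ⟨S', hS'⟩ := hidemsum (cg g⁻¹ (e j)) (by rw [← hcg_mul, hidem])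
    have h2' : (if i ∈ S' then e i else 0) = ∑ k ∈ S', e k := by
      rw [← hsummul, ← hS', h2, hS']
    by_cases hiS' : i ∈ S'
    · rw [if_pos hiS'] at h2'
      have hS'sing : S' = {i} := by
        refine Finset.eq_singleton_iff_unique_mem.mpr ⟨hiS', fun k hk => ?_⟩
        by_contra hki
        refine hne k ?_
        have h3 : e i * e k = e k := by
          rw [h2', hsummul, if_pos hk]
        rw [← h3]
        exact horthmul i k (fun h => hki h.symm)
      have h5 : cg g⁻¹ (e j) = e i := by rw [hS', hS'sing, Finset.sum_singleton]
      have h6 := congrArg (cg g) h5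
      rw [hcg_inv'] at h6
      exact congrArg Subtype.val h6.symm
    · rw [if_neg hiS'] at h2'
      exact absurd (by rw [hS', ← h2']) (hcg_ne g⁻¹ (e j) (hne j))
  set E : Fin n → (H →L[ℂ] H) := fun i => (e i).1 with hE
  have hidem' : ∀ i, E i * E i = E i := fun i => congrArg Subtype.val (hidem i)
  have horth' : ∀ i j, i ≠ j → E i * E j = 0 := fun i j hij =>
    congrArg Subtype.val (horthmul i j hij)
  have hne' : ∀ i, E i ≠ 0 := by
    intro i h
    exact hne i (Subtype.ext h)
  have hsum' : ∑ i, E i = 1 := by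
    have := congrArg A.val hsum
    rwa [map_sum, map_one] at this
  -- the permutation induced by conjugation
  set σ : G → Fin n → Fin n := fun g i => Classical.choose (hperm g i) with hσdef
  have hσ : ∀ g i, (π g : H →L[ℂ] H) * E i * ((π g)⁻¹ : unitary (H →L[ℂ] H)) = E (σ g i) :=
    fun g i => Classical.choose_spec (hperm g i)
  have hcancel : ∀ (g : G) (X : H →L[ℂ] H),
      (((π g)⁻¹ : unitary (H →L[ℂ] H)) : H →L[ℂ] H)
        * ((π g : H →L[ℂ] H) * X * ((π g)⁻¹ : unitary (H →L[ℂ] H)))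
        * (π g : H →L[ℂ] H) = X := by
    intro g X
    simp only [mul_assoc]
    rw [hval g, mul_one, ← mul_assoc, hval g, one_mul]
  have hσbij : ∀ g, Function.Bijective (σ g) := by
    intro g
    rw [← Finite.injective_iff_bijective]
    intro i j hij
    have h1 : (π g : H →L[ℂ] H) * E i * ((π g)⁻¹ : unitary (H →L[ℂ] H))
        = (π g : H →L[ℂ] H) * E j * ((π g)⁻¹ : unitary (H →L[ℂ] H)) := by
      rw [hσ g i, hσ g j, hij]
    have h2 : E i = E j := by
      rw [← hcancel g (E i), h1, hcancel g (E j)]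
    by_contra hij'
    exact hne' i (by rw [← hidem' i]; nth_rewrite 2 [h2]; exact horth' i j hij')
  -- star facts
  have hstaru : ∀ g, star ((π g : H →L[ℂ] H))
      = (((π g)⁻¹ : unitary (H →L[ℂ] H)) : H →L[ℂ] H) := by
    intro g
    rw [← Unitary.star_eq_inv]; rfl
  have hstarw : ∀ g, star ((((π g)⁻¹ : unitary (H →L[ℂ] H))) : H →L[ℂ] H)
      = (π g : H →L[ℂ] H) := by
    intro g
    rw [← hstaru, star_star]
  -- the Schur operator
  set Q : H →L[ℂ] H := ∑ i, star (E i) * E i with hQ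
  have hQconj : ∀ g : G, (π g : H →L[ℂ] H) * Q * ((π g)⁻¹ : unitary (H →L[ℂ] H)) = Q := by
    intro g
    rw [hQ, Finset.mul_sum, Finset.sum_mul]
    calc ∑ i, (π g : H →L[ℂ] H) * (star (E i) * E i) * ((π g)⁻¹ : unitary (H →L[ℂ] H))
        = ∑ i, star (E (σ g i)) * E (σ g i) := by
          refine Finset.sum_congr rfl fun i _ => ?_
          have h1 : (π g : H →L[ℂ] H) * (star (E i) * E i)
                * ((π g)⁻¹ : unitary (H →L[ℂ] H))
              = ((π g : H →L[ℂ] H) * star (E i) * ((π g)⁻¹ : unitary (H →L[ℂ] H)))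
                * ((π g : H →L[ℂ] H) * E i * ((π g)⁻¹ : unitary (H →L[ℂ] H))) := by
            simp only [mul_assoc]
            rw [← mul_assoc (((π g)⁻¹ : unitary (H →L[ℂ] H)) : H →L[ℂ] H)
              (π g : H →L[ℂ] H), hval g, one_mul]
          have h2 : (π g : H →L[ℂ] H) * star (E i) * ((π g)⁻¹ : unitary (H →L[ℂ] H))
              = star ((π g : H →L[ℂ] H) * E i * ((π g)⁻¹ : unitary (H →L[ℂ] H))) := by
            rw [star_mul, star_mul, hstaru g, hstarw g, mul_assoc]
          rw [h1, h2, hσ g i]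
      _ = ∑ i, star (E i) * E i :=
          Equiv.sum_comp (Equiv.ofBijective (σ g) (hσbij g)) (fun j => star (E j) * E j)
  have hQcomm : ∀ g : G, (π g : H →L[ℂ] H) * Q = Q * (π g : H →L[ℂ] H) := by
    intro g
    have := congrArg (fun X => X * (π g : H →L[ℂ] H)) (hQconj g)
    simp only [mul_assoc] at this
    rwa [hval g, mul_one] at this
  -- Schur : Q is scalar
  obtain ⟨μ, hμ⟩ := Module.End.exists_eigenvalue ((Q : H →ₗ[ℂ] H) : Module.End ℂ H)
  set W := Module.End.eigenspace ((Q : H →ₗ[ℂ] H) : Module.End ℂ H) μ with hW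
  have hWinv : ∀ g : G, ∀ v ∈ W, (π g : H →L[ℂ] H) v ∈ W := by
    intro g v hv
    rw [hW, Module.End.mem_eigenspace_iff] at hv ⊢
    have happ := congrArg (fun X : H →L[ℂ] H => X v) (hQcomm g)
    simp only [ContinuousLinearMap.mul_apply] at happ
    show Q ((π g : H →L[ℂ] H) v) = μ • (π g : H →L[ℂ] H) v
    rw [← happ]
    show (π g : H →L[ℂ] H) (Q v) = _
    rw [show (Q : H →ₗ[ℂ] H) v = Q v from rfl] at hv
    rw [hv, map_smul]
  have hWtop : W = ⊤ := by
    rcases hirr W hWinv with h | h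
    · exact absurd h hμ
    · exact h
  have hQv : ∀ v : H, Q v = μ • v := by
    intro v
    have : v ∈ W := hWtop ▸ Submodule.mem_top
    rw [hW, Module.End.mem_eigenspace_iff] at this
    exact this
  -- inner product computation
  have hQinner : ∀ v : H, ⟪v, Q v⟫_ℂ = ∑ i, ⟪E i v, E i v⟫_ℂ := by
    intro v
    rw [hQ]
    rw [ContinuousLinearMap.sum_apply, inner_sum]
    refine Finset.sum_congr rfl fun i _ => ?_
    rw [ContinuousLinearMap.mul_apply, ContinuousLinearMap.star_eq_adjoint,
      ContinuousLinearMap.adjoint_inner_right]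
  -- μ = 1
  have hμ1 : μ = 1 := by
    obtain ⟨v, hv⟩ := exists_ne (0 : H)
    have hex : ∃ j, E j v ≠ 0 := by
      by_contra hall
      push_neg at hall
      apply hv
      have : (1 : H →L[ℂ] H) v = v := rfl
      rw [← this, ← hsum', ContinuousLinearMap.sum_apply]
      exact Finset.sum_eq_zero fun i _ => hall i
    obtain ⟨j, hj⟩ := hex
    set w := E j v with hw
    have hEw : ∀ i, E i w = if i = j then w else 0 := by
      intro i
      by_cases hij : i = j
      · subst hij
        rw [if_pos rfl, hw, show E i (E i v) = (E i * E i) v from rfl, hidem' i]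
      · rw [if_neg hij, hw, show E i (E j v) = (E i * E j) v from rfl, horth' i j hij]
        rfl
    have h1 : ⟪w, Q w⟫_ℂ = ⟪w, w⟫_ℂ := by
      rw [hQinner]
      rw [Finset.sum_eq_single j]
      · rw [hEw j, if_pos rfl]
      · intro i _ hij
        rw [hEw i, if_neg hij]
        simp
      · intro h
        exact absurd (Finset.mem_univ j) h
    rw [hQv w, inner_smul_right] at h1
    have hww : ⟪w, w⟫_ℂ ≠ 0 := inner_self_ne_zero.mpr hj
    have h2 : μ * ⟪w, w⟫_ℂ = 1 * ⟪w, w⟫_ℂ := by rw [one_mul]; exact h1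
    exact mul_right_cancel₀ hww h2
  have key : ∀ v : H, ∑ i, ⟪E i v, E i v⟫_ℂ = ⟪v, v⟫_ℂ := by
    intro v
    rw [← hQinner, hQv, inner_smul_right, hμ1, one_mul]
  -- orthogonality of ranges
  have horthog : ∀ i j, i ≠ j → ∀ x y : H, ⟪E i x, E j y⟫_ℂ = 0 := by
    intro i j hij x y
    set a := E i x with ha
    set b := E j y with hb
    have hgen : ∀ c : ℂ, c * ⟪a, b⟫_ℂ + conj c * conj ⟪a, b⟫_ℂ = 0 := by
      intro c
      have hv := key (a + c • b)
      have hEkv : ∀ k, E k (a + c • b) = (if k = i then a else 0) + c • (if k = j then b else 0) := by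
        intro k
        rw [map_add, map_smul]
        congr 1
        · rw [ha, show E k (E i x) = (E k * E i) x from rfl]
          by_cases hk : k = i
          · subst hk; rw [if_pos rfl, hidem' k]
          · rw [if_neg hk, horth' k i hk]; rfl
        · congr 1
          rw [hb, show E k (E j y) = (E k * E j) y from rfl]
          by_cases hk : k = j
          · subst hk; rw [if_pos rfl, hidem' k]
          · rw [if_neg hk, horth' k j hk]; rfl
      have hterm : ∀ k, ⟪E k (a + c • b), E k (a + c • b)⟫_ℂ
          = (if k = i then ⟪a, a⟫_ℂ else 0) + (if k = j then ⟪c • b, c • b⟫_ℂ else 0) := by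
        intro k
        rw [hEkv k]
        by_cases hk : k = i
        · subst hk
          rw [if_pos rfl, if_pos rfl, if_neg hij, if_neg hij]
          simp
        · rw [if_neg hk, if_neg hk]
          by_cases hk2 : k = j
          · subst hk2
            rw [if_pos rfl, if_pos rfl]
            simp
          · rw [if_neg hk2, if_neg hk2]
            simp
      rw [Finset.sum_congr rfl fun k _ => hterm k, Finset.sum_add_distrib,
        Finset.sum_ite_eq' Finset.univ i, Finset.sum_ite_eq' Finset.univ j,
        if_pos (Finset.mem_univ i), if_pos (Finset.mem_univ j)] at hv
      rw [inner_add_add_self] at hv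
      have hab : ⟪a, c • b⟫_ℂ = c * ⟪a, b⟫_ℂ := by rw [inner_smul_right]
      have hba : ⟪c • b, a⟫_ℂ = conj c * conj ⟪a, b⟫_ℂ := by
        rw [inner_smul_left, ← inner_conj_symm b a]
      rw [hab, hba] at hv
      linear_combination hv.symm
    have h1 := hgen 1
    have h2 := hgen Complex.I
    rw [one_mul, map_one, one_mul] at h1
    rw [Complex.conj_I] at h2
    have h3 : (2 * Complex.I) * ⟪a, b⟫_ℂ = 0 := by linear_combination h2 + Complex.I * h1
    rcases mul_eq_zero.mp h3 with h | h
    · exact absurd h (by simp [Complex.I_ne_zero])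
    · exact h
  -- each E i is self-adjoint
  have hsa : ∀ i, star (E i) = E i := by
    intro i
    have hsym : ∀ x y : H, ⟪E i x, y⟫_ℂ = ⟪x, E i y⟫_ℂ := by
      intro x y
      have hy : y = ∑ k, E k y := by
        rw [← ContinuousLinearMap.sum_apply, hsum']
        rfl
      have hx : x = ∑ k, E k x := by
        rw [← ContinuousLinearMap.sum_apply, hsum']
        rfl
      conv_lhs => rw [hy]
      conv_rhs => rw [hx]
      rw [inner_sum, sum_inner]
      rw [Finset.sum_eq_single i (fun k _ hk => horthog i k (Ne.symm hk) x y)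
        (fun h => absurd (Finset.mem_univ i) h),
        Finset.sum_eq_single i (fun k _ hk => horthog k i hk x y)
        (fun h => absurd (Finset.mem_univ i) h)]
    rw [ContinuousLinearMap.star_eq_adjoint]
    exact ((ContinuousLinearMap.eq_adjoint_iff (E i) (E i)).mpr hsym).symm
  -- conclusion
  intro T hT
  set a : ↥A := ⟨T, hT⟩ with haA
  have hadec : a = ∑ i, Classical.choose (hscalar a i) • e i := by
    conv_lhs => rw [← mul_one a, ← hsum, Finset.mul_sum]
    exact Finset.sum_congr rfl fun i _ => Classical.choose_spec (hscalar a i)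
  have hTdec : T = A.val (∑ i, Classical.choose (hscalar a i) • e i) := congrArg A.val hadec
  rw [hTdec, map_sum, star_sum]
  refine Subalgebra.sum_mem _ fun i _ => ?_
  rw [map_smul, star_smul]
  have hval_e : A.val (e i) = E i := rfl
  rw [hval_e, hsa i]
  exact Subalgebra.smul_mem _ (e i).2 _
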